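/- In the alternation product graph G_alt³, two distinct critical paths cannot share two vertices lying in layers i and j with |i − j| ≥ 3; hence any pairwise intersection of critical paths is contained in a path of length at most 2. -/

import Mathlib

/-- `V₂⁺(r)`: lattice points of `ℤ²` with nonnegative coordinates that are vertices
(extreme points) of the convex hull of the lattice points in the disk of radius `r`. -/
def V2plus (r : ℕ) : Set (ℤ × ℤ) :=
  {p : ℤ × ℤ | 0 ≤ p.1 ∧ 0 ≤ p.2 ∧
    ((p.1 : ℝ), (p.2 : ℝ)) ∈ Set.extremePoints ℝ (convexHull ℝ
      {x : ℝ × ℝ | ∃ q : ℤ × ℤ, (q.1 : ℝ) ^ 2 + (q.2 : ℝ) ^ 2 ≤ (r : ℝ) ^ 2 ∧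
        x = ((q.1 : ℝ), (q.2 : ℝ))})}

/-- The layer-`i` vertex of the critical path of `G_alt³` determined by start vertex
`x ∈ (ℤ/(3Dr)ℤ)⁴` and step vectors `g, g', g'' ∈ V₂⁺(r)`: among the first `i` steps,
`⌈i/3⌉ = (i+2)/3` are of type `0 (mod 3)` adding `g` to coordinates `(1,2)`,
`(i+1)/3` are of type `1 (mod 3)` adding `g'` to coordinates `(2,3)`, and
`⌊i/3⌋` are of type `2 (mod 3)` adding `g''` to coordinates `(3,4)`. -/
def cv3 (M : ℕ) (x : Fin 4 → ZMod M) (g g' g'' : ℤ × ℤ) (i : ℕ) : Fin 4 → ZMod M :=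
  ![x 0 + (((((i + 2) / 3 : ℕ) : ℤ) * g.1 : ℤ) : ZMod M),
    x 1 + (((((i + 2) / 3 : ℕ) : ℤ) * g.2 + (((i + 1) / 3 : ℕ) : ℤ) * g'.1 : ℤ) : ZMod M),
    x 2 + (((((i + 1) / 3 : ℕ) : ℤ) * g'.2 + ((i / 3 : ℕ) : ℤ) * g''.1 : ℤ) : ZMod M),
    x 3 + ((((i / 3 : ℕ) : ℤ) * g''.2 : ℤ) : ZMod M)]

lemma v2_sq_le {r : ℕ} {p : ℤ × ℤ} (hp : p ∈ V2plus r) :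
    p.1 ^ 2 + p.2 ^ 2 ≤ (r : ℤ) ^ 2 := by
  obtain ⟨h1, h2, hext⟩ := hp
  obtain ⟨q, hq, heq⟩ := extremePoints_convexHull_subset hext
  have h1 : (p.1 : ℝ) = q.1 := congrArg Prod.fst heq
  have h2 : (p.2 : ℝ) = q.2 := congrArg Prod.snd heq
  have e1 : p.1 = q.1 := by exact_mod_cast h1
  have e2 : p.2 = q.2 := by exact_mod_cast h2
  rw [e1, e2]; exact_mod_cast hq

lemma v2_aux1 {r : ℕ} {p q : ℤ × ℤ} (hp : p ∈ V2plus r) (hq : q ∈ V2plus r)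
    (h1 : p.1 = q.1) (h2 : p.2 < q.2) : False := by
  obtain ⟨hp1, hp2, hext⟩ := hp
  have hqr : q.1 ^ 2 + q.2 ^ 2 ≤ (r : ℤ) ^ 2 := v2_sq_le hq
  have hq2pos : (0 : ℝ) < (q.2 : ℝ) := by exact_mod_cast lt_of_le_of_lt hp2 h2
  have hA : ((p.1 : ℝ), (q.2 : ℝ)) ∈ convexHull ℝ
      {x : ℝ × ℝ | ∃ c : ℤ × ℤ, (c.1 : ℝ) ^ 2 + (c.2 : ℝ) ^ 2 ≤ (r : ℝ) ^ 2 ∧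
        x = ((c.1 : ℝ), (c.2 : ℝ))} := by
    apply subset_convexHull
    exact ⟨(p.1, q.2), by rw [h1]; exact_mod_cast hqr, rfl⟩
  have hB : ((p.1 : ℝ), (-q.2 : ℝ)) ∈ convexHull ℝ
      {x : ℝ × ℝ | ∃ c : ℤ × ℤ, (c.1 : ℝ) ^ 2 + (c.2 : ℝ) ^ 2 ≤ (r : ℝ) ^ 2 ∧
        x = ((c.1 : ℝ), (c.2 : ℝ))} := by
    apply subset_convexHull
    refine ⟨(p.1, -q.2), ?_, by push_cast; rfl⟩
    push_cast
    rw [h1]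
    have : (-(q.2:ℝ)) ^ 2 = (q.2:ℝ)^2 := by ring
    rw [this]
    exact_mod_cast hqr
  have hp2' : (0:ℝ) ≤ (p.2:ℝ) := by exact_mod_cast hp2
  have h2' : (p.2:ℝ) < (q.2:ℝ) := by exact_mod_cast h2
  set b : ℝ := ((p.2:ℝ) + q.2) / (2 * q.2) with hbdef
  have hb : 0 < b := by positivity
  have hblt : b < 1 := by
    rw [hbdef, div_lt_one (by positivity)]
    linarith
  have hseg : ((p.1 : ℝ), (p.2 : ℝ)) ∈
      openSegment ℝ ((p.1 : ℝ), (-q.2 : ℝ)) ((p.1 : ℝ), (q.2 : ℝ)) := by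
    refine ⟨1 - b, b, by linarith, hb, by ring, ?_⟩
    have hne : (2 * (q.2:ℝ)) ≠ 0 := by positivity
    ext <;> simp [Prod.smul_def, hbdef] <;> field_simp <;> ring
  have := hext.2 hB hA hseg
  have : (-q.2 : ℝ) = (p.2 : ℝ) := congrArg Prod.snd this
  have : -q.2 = p.2 := by exact_mod_cast this
  omega

lemma v2_aux2 {r : ℕ} {p q : ℤ × ℤ} (hp : p ∈ V2plus r) (hq : q ∈ V2plus r)
    (h2 : p.2 = q.2) (h1 : p.1 < q.1) : False := by
  obtain ⟨hp1, hp2, hext⟩ := hp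
  have hqr : q.1 ^ 2 + q.2 ^ 2 ≤ (r : ℤ) ^ 2 := v2_sq_le hq
  have hq1pos : (0 : ℝ) < (q.1 : ℝ) := by exact_mod_cast lt_of_le_of_lt hp1 h1
  have hA : ((q.1 : ℝ), (p.2 : ℝ)) ∈ convexHull ℝ
      {x : ℝ × ℝ | ∃ c : ℤ × ℤ, (c.1 : ℝ) ^ 2 + (c.2 : ℝ) ^ 2 ≤ (r : ℝ) ^ 2 ∧
        x = ((c.1 : ℝ), (c.2 : ℝ))} := by
    apply subset_convexHull
    exact ⟨(q.1, p.2), by rw [h2]; exact_mod_cast hqr, rfl⟩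
  have hB : ((-q.1 : ℝ), (p.2 : ℝ)) ∈ convexHull ℝ
      {x : ℝ × ℝ | ∃ c : ℤ × ℤ, (c.1 : ℝ) ^ 2 + (c.2 : ℝ) ^ 2 ≤ (r : ℝ) ^ 2 ∧
        x = ((c.1 : ℝ), (c.2 : ℝ))} := by
    apply subset_convexHull
    refine ⟨(-q.1, p.2), ?_, by push_cast; rfl⟩
    push_cast
    rw [h2]
    have : (-(q.1:ℝ)) ^ 2 = (q.1:ℝ)^2 := by ring
    rw [this]
    exact_mod_cast hqr
  have hp1' : (0:ℝ) ≤ (p.1:ℝ) := by exact_mod_cast hp1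
  have h1' : (p.1:ℝ) < (q.1:ℝ) := by exact_mod_cast h1
  set b : ℝ := ((p.1:ℝ) + q.1) / (2 * q.1) with hbdef
  have hb : 0 < b := by positivity
  have hblt : b < 1 := by
    rw [hbdef, div_lt_one (by positivity)]
    linarith
  have hseg : ((p.1 : ℝ), (p.2 : ℝ)) ∈
      openSegment ℝ ((-q.1 : ℝ), (p.2 : ℝ)) ((q.1 : ℝ), (p.2 : ℝ)) := by
    refine ⟨1 - b, b, by linarith, hb, by ring, ?_⟩
    have hne : (2 * (q.1:ℝ)) ≠ 0 := by positivity
    ext <;> simp [Prod.smul_def, hbdef] <;> field_simp <;> ring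
  have := hext.2 hB hA hseg
  have : (-q.1 : ℝ) = (p.1 : ℝ) := congrArg Prod.fst this
  have : -q.1 = p.1 := by exact_mod_cast this
  omega

lemma v2_fst_inj {r : ℕ} {p q : ℤ × ℤ} (hp : p ∈ V2plus r) (hq : q ∈ V2plus r)
    (h : p.1 = q.1) : p = q := by
  rcases lt_trichotomy p.2 q.2 with hlt | heq | hgt
  · exact absurd (v2_aux1 hp hq h hlt) (by simp)
  · exact Prod.ext h heq
  · exact absurd (v2_aux1 hq hp h.symm hgt) (by simp)

lemma v2_snd_inj {r : ℕ} {p q : ℤ × ℤ} (hp : p ∈ V2plus r) (hq : q ∈ V2plus r)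
    (h : p.2 = q.2) : p = q := by
  rcases lt_trichotomy p.1 q.1 with hlt | heq | hgt
  · exact absurd (v2_aux2 hp hq h hlt) (by simp)
  · exact Prod.ext heq h
  · exact absurd (v2_aux2 hq hp h.symm hgt) (by simp)

lemma v2_coord_le {r : ℕ} {p : ℤ × ℤ} (hp : p ∈ V2plus r) : p.1 ≤ r ∧ p.2 ≤ r := by
  have hsq := v2_sq_le hp
  obtain ⟨h1, h2, -⟩ := hp
  constructor <;> nlinarith

lemma zmod_cancel {D r : ℕ} (hD : 0 < D) (hr : 0 < r) {c : ℕ} {d : ℤ}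
    (hc1 : 1 ≤ c) (hc2 : c ≤ D) (hd : |d| ≤ (r : ℤ))
    (h : (((c : ℤ) * d : ℤ) : ZMod (3 * D * r)) = 0) : d = 0 := by
  haveI : NeZero (3 * D * r) := ⟨by positivity⟩
  have hdvd : ((3 * D * r : ℕ) : ℤ) ∣ (c : ℤ) * d :=
    (ZMod.intCast_zmod_eq_zero_iff_dvd _ _).mp h
  have hcD : (c : ℤ) ≤ (D : ℤ) := by exact_mod_cast hc2
  have hc0 : (1 : ℤ) ≤ (c : ℤ) := by exact_mod_cast hc1
  have habs : |(c : ℤ) * d| < ((3 * D * r : ℕ) : ℤ) := by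
    rw [abs_mul, abs_of_nonneg (by linarith : (0 : ℤ) ≤ (c : ℤ))]
    push_cast
    have hr' : (1 : ℤ) ≤ (r : ℤ) := by exact_mod_cast hr
    have hD' : (1 : ℤ) ≤ (D : ℤ) := by exact_mod_cast hD
    nlinarith [abs_nonneg d]
  have hz := Int.eq_zero_of_abs_lt_dvd hdvd habs
  rcases mul_eq_zero.mp hz with hc | hd0
  · exact absurd hc (by positivity)
  · exact hd0

/-- In `G_alt³`, two distinct critical paths cannot share two vertices
lying in layers `i` and `j` with `|i − j| ≥ 3`: if two critical paths agree in layers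
`i` and `j ≥ i + 3`, then they are the same critical path. Hence any pairwise
intersection of critical paths is contained in a path of length at most 2. -/
theorem stmt8 (D r : ℕ) (hD : 0 < D) (hr : 0 < r)
    (x x' : Fin 4 → ZMod (3 * D * r)) (g g' g'' h h' h'' : ℤ × ℤ)
    (hg : g ∈ V2plus r) (hg' : g' ∈ V2plus r) (hg'' : g'' ∈ V2plus r)
    (hh : h ∈ V2plus r) (hh' : h' ∈ V2plus r) (hh'' : h'' ∈ V2plus r)
    (i j : ℕ) (hij : i + 3 ≤ j) (hj : j ≤ 3 * D)
    (hshare1 : cv3 (3 * D * r) x g g' g'' i = cv3 (3 * D * r) x' h h' h'' i)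
    (hshare2 : cv3 (3 * D * r) x g g' g'' j = cv3 (3 * D * r) x' h h' h'' j) :
    x = x' ∧ g = h ∧ g' = h' ∧ g'' = h'' := by
  have e10 := congrFun hshare1 0
  have e11 := congrFun hshare1 1
  have e12 := congrFun hshare1 2
  have e13 := congrFun hshare1 3
  have e20 := congrFun hshare2 0
  have e21 := congrFun hshare2 1
  have e23 := congrFun hshare2 3
  simp only [cv3, Matrix.cons_val_zero, Matrix.cons_val_one, Matrix.head_cons,
    Matrix.cons_val_two, Matrix.tail_cons, Matrix.cons_val_three] at e10 e11 e12 e13 e20 e21 e23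
  obtain ⟨c0, hc0, hc01, hc02⟩ : ∃ c, (j + 2) / 3 = (i + 2) / 3 + c ∧ 1 ≤ c ∧ c ≤ D :=
    ⟨(j + 2) / 3 - (i + 2) / 3, by omega, by omega, by omega⟩
  obtain ⟨c1, hc1, hc11, hc12⟩ : ∃ c, (j + 1) / 3 = (i + 1) / 3 + c ∧ 1 ≤ c ∧ c ≤ D :=
    ⟨(j + 1) / 3 - (i + 1) / 3, by omega, by omega, by omega⟩
  obtain ⟨c2, hc2, hc21, hc22⟩ : ∃ c, j / 3 = i / 3 + c ∧ 1 ≤ c ∧ c ≤ D :=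
    ⟨j / 3 - i / 3, by omega, by omega, by omega⟩
  rw [hc0] at e20 e21
  rw [hc1] at e21
  rw [hc2] at e23
  -- bounds
  obtain ⟨bg1, bg2⟩ := v2_coord_le hg
  obtain ⟨bh1, bh2⟩ := v2_coord_le hh
  obtain ⟨bg1', bg2'⟩ := v2_coord_le hg'
  obtain ⟨bh1', bh2'⟩ := v2_coord_le hh'
  obtain ⟨bg1'', bg2''⟩ := v2_coord_le hg''
  obtain ⟨bh1'', bh2''⟩ := v2_coord_le hh''
  have ng := hg.1; have ng2 := hg.2.1
  have nh := hh.1; have nh2 := hh.2.1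
  have ng' := hg'.1; have ng2' := hg'.2.1
  have nh' := hh'.1; have nh2' := hh'.2.1
  have ng'' := hg''.1; have ng2'' := hg''.2.1
  have nh'' := hh''.1; have nh2'' := hh''.2.1
  -- step 1: g = h
  have k0 : (((c0 : ℤ) * (g.1 - h.1) : ℤ) : ZMod (3 * D * r)) = 0 := by
    push_cast at e10 e20 ⊢
    linear_combination e20 - e10
  have d0 : g.1 = h.1 := by
    have := zmod_cancel hD hr hc01 hc02 (by rw [abs_le]; omega) k0
    omega
  have hgh : g = h := v2_fst_inj hg hh d0
  subst hgh
  -- step 2: g' = h'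
  have k1 : (((c1 : ℤ) * (g'.1 - h'.1) : ℤ) : ZMod (3 * D * r)) = 0 := by
    push_cast at e11 e21 ⊢
    linear_combination e21 - e11
  have d1 : g'.1 = h'.1 := by
    have := zmod_cancel hD hr hc11 hc12 (by rw [abs_le]; omega) k1
    omega
  have hgh' : g' = h' := v2_fst_inj hg' hh' d1
  subst hgh'
  -- step 3: g'' = h''
  have k2 : (((c2 : ℤ) * (g''.2 - h''.2) : ℤ) : ZMod (3 * D * r)) = 0 := by
    push_cast at e13 e23 ⊢
    linear_combination e23 - e13
  have d2 : g''.2 = h''.2 := by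
    have := zmod_cancel hD hr hc21 hc22 (by rw [abs_le]; omega) k2
    omega
  have hgh'' : g'' = h'' := v2_snd_inj hg'' hh'' d2
  subst hgh''
  refine ⟨?_, rfl, rfl, rfl⟩
  funext k
  fin_cases k
  · exact add_right_cancel e10
  · exact add_right_cancel e11
  · exact add_right_cancel e12
  · exact add_right_cancel e13
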